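/- Let G be a finite abelian group with D*(G) even. If E is a pair-nice zero-sum sequence over G, X_1 is an atom of length D*(G), and E·X_1 is a product of atoms of length 2, then E·X_1 is nice. -/

import Mathlib

open scoped Pointwise

section Defs

variable (G : Type*) [AddCommGroup G]

/-- `S` is a minimal zero-sum sequence (an atom of the monoid `B(G)` of zero-sum
sequences): it is nonempty, has sum zero, and no proper nonempty subsequence has sum zero. -/
def IsMinZS (S : Multiset G) : Prop :=
  S ≠ 0 ∧ S.sum = 0 ∧ ∀ T : Multiset G, T ≤ S → T ≠ 0 → T ≠ S → T.sum ≠ 0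

/-- `S` is a product of `k` atoms of `B(G)`. -/
def IsProdOfAtoms (k : ℕ) (S : Multiset G) : Prop :=
  ∃ L : Multiset (Multiset G), Multiset.card L = k ∧ (∀ U ∈ L, IsMinZS G U) ∧ L.sum = S

/-- `S` is a product of atoms of length `2`. -/
def IsProd2Atoms (S : Multiset G) : Prop :=
  ∃ L : Multiset (Multiset G), (∀ U ∈ L, IsMinZS G U ∧ Multiset.card U = 2) ∧ L.sum = S

/-- The set of lengths of `A` in `B(G)`. -/
def LSet (A : Multiset G) : Set ℕ := { k | IsProdOfAtoms G k A }

/-- `U_k(G)`: the set of `m` such that some product of `k` atoms equals a product of `m` atoms. -/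
def UkSet (k : ℕ) : Set ℕ :=
  { m | ∃ S : Multiset G, IsProdOfAtoms G k S ∧ IsProdOfAtoms G m S }

/-- `ρ_k(G) = sup U_k(G)`. -/
noncomputable def rho (k : ℕ) : ℕ := sSup (UkSet G k)

/-- The Davenport constant `D(G)`: the maximal length of a minimal zero-sum sequence. -/
noncomputable def Dav : ℕ :=
  sSup { n : ℕ | ∃ S : Multiset G, IsMinZS G S ∧ Multiset.card S = n }

/-- `A` is pair-nice with factorization into `2k` atoms of length `d` (where `d` plays
the role of `D^*(G)`). -/
def PairNiceWith (d k : ℕ) (A : Multiset G) : Prop :=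
  1 ≤ k ∧ ∃ (U : Fin (2 * k) → Multiset G) (g : Fin (2 * k) → G),
    (∀ i, IsMinZS G (U i) ∧ Multiset.card (U i) = d) ∧
    (∑ i, U i) = A ∧ (∀ i, g i ∈ U i) ∧
    IsProd2Atoms G (∑ i, ({g i} : Multiset G))

/-- `A` is pair-nice (with respect to `G`, with `d = D^*(G)`). -/
def PairNice (d : ℕ) (A : Multiset G) : Prop := ∃ k, PairNiceWith G d k A

/-- `A` is nice with factorization into `2k+1` atoms of length `d` (where `d` plays the
role of `D^*(G)`), as in Definition 3.1 of the paper. -/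
def NiceWith [DecidableEq G] (d k : ℕ) (A : Multiset G) : Prop :=
  1 ≤ k ∧ ∃ (U : Fin (2 * k + 1) → Multiset G) (g : Fin (2 * k + 1) → G),
    (∀ i, IsMinZS G (U i) ∧ Multiset.card (U i) = d) ∧
    (∑ i, U i) = A ∧ (∀ i, g i ∈ U i) ∧
    ((Odd d ∧ IsProd2Atoms G (A - ∑ i, ({g i} : Multiset G)) ∧
        ∃ W : Fin k → Multiset G, (∀ j, IsMinZS G (W j)) ∧
          (∀ j : Fin k, Multiset.card (W j) = if (j : ℕ) = 0 then 3 else 2) ∧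
          (∑ j, W j) = ∑ i, ({g i} : Multiset G)) ∨
      (Even d ∧ ∃ h : G, h ∈ A - ∑ i, ({g i} : Multiset G) ∧
        IsProd2Atoms G (A - ((∑ i, ({g i} : Multiset G)) + {h})) ∧
        IsProd2Atoms G ((∑ i, ({g i} : Multiset G)) + {h})))

/-- `A` is nice (with respect to `G`, with `d = D^*(G)`). -/
def Nice [DecidableEq G] (d : ℕ) (A : Multiset G) : Prop := ∃ k, NiceWith G d k A

end Defs

section MonoidDefs

variable (H : Type*) [CommMonoid H]

/-- `U_k(H)` for a monoid `H`: the set of `m` such that some product of `k` irreducible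
elements (atoms) of `H` equals a product of `m` atoms. -/
def UkM (k : ℕ) : Set ℕ :=
  { m | ∃ L L' : Multiset H, Multiset.card L = k ∧ Multiset.card L' = m ∧
      (∀ u ∈ L, Irreducible u) ∧ (∀ v ∈ L', Irreducible v) ∧ L.prod = L'.prod }

/-- `ρ_k(H) = sup U_k(H)`. -/
noncomputable def rhoM (k : ℕ) : ℕ := sSup (UkM H k)

end MonoidDefs

section AuxLemmas

variable {G : Type*} [AddCommGroup G] [DecidableEq G]

/-- A multiset is balanced if it avoids `0`, is symmetric under negation (counted with
multiplicity), and 2-torsion elements occur an even number of times. -/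
def Bal (S : Multiset G) : Prop :=
  (0 : G) ∉ S ∧ (∀ x : G, S.count x = S.count (-x)) ∧
    ∀ x : G, x + x = 0 → Even (S.count x)

lemma bal_zero : Bal (0 : Multiset G) := ⟨by simp, by simp, by simp⟩

lemma bal_add {S T : Multiset G} (hS : Bal S) (hT : Bal T) : Bal (S + T) := by
  refine ⟨?_, fun x => ?_, fun x hx => ?_⟩
  · simp only [Multiset.mem_add, not_or]
    exact ⟨hS.1, hT.1⟩
  · simp [Multiset.count_add, hS.2.1 x, hT.2.1 x]
  · simpa [Multiset.count_add] using (hS.2.2 x hx).add (hT.2.2 x hx)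

lemma count_pair (x y : G) :
    ({x, -x} : Multiset G).count y =
      (if y = x then 1 else 0) + (if y = -x then 1 else 0) := by
  rw [Multiset.insert_eq_cons, Multiset.count_cons, Multiset.count_singleton, add_comm]

lemma bal_pair {x : G} (hx : x ≠ 0) : Bal ({x, -x} : Multiset G) := by
  refine ⟨?_, fun y => ?_, fun y hy => ?_⟩
  · simp only [Multiset.insert_eq_cons, Multiset.mem_cons, Multiset.mem_singleton, not_or]
    exact ⟨fun h => hx h.symm, fun h => hx (neg_eq_zero.mp h.symm)⟩
  · rw [count_pair, count_pair]
    simp only [neg_inj, neg_eq_iff_eq_neg, neg_neg]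
    exact add_comm _ _
  · have hyy : -y = y := neg_eq_of_add_eq_zero_left hy
    rw [count_pair]
    by_cases h : y = x
    · have h2 : y = -x := by rw [← h, hyy]
      rw [if_pos h, if_pos h2]
      exact ⟨1, rfl⟩
    · have h2 : y ≠ -x := by
        intro hc
        exact h (by rw [← neg_neg x, ← hc, hyy])
      simp [h, h2]

lemma bal_sub {S T : Multiset G} (hS : Bal S) (hT : Bal T) (hle : T ≤ S) :
    Bal (S - T) := by
  refine ⟨fun h0 => hS.1 (Multiset.mem_of_le (Multiset.sub_le_self S T) h0),
    fun x => ?_, fun x hx => ?_⟩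
  · rw [Multiset.count_sub, Multiset.count_sub, hS.2.1 x, hT.2.1 x]
  · have h1 := hS.2.2 x hx
    have h2 := hT.2.2 x hx
    rw [Multiset.count_sub]
    rw [Nat.even_iff] at *
    omega

lemma pair_atom {x : G} (hx : x ≠ 0) :
    IsMinZS G ({x, -x} : Multiset G) ∧ Multiset.card ({x, -x} : Multiset G) = 2 := by
  have hcard : Multiset.card ({x, -x} : Multiset G) = 2 := by
    rw [Multiset.insert_eq_cons]; simp
  refine ⟨⟨?_, by simp, ?_⟩, hcard⟩
  · rw [Multiset.insert_eq_cons]; exact Multiset.cons_ne_zero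
  · intro T hle hT0 hTne
    have hc2 : Multiset.card T ≤ 2 := by
      have := Multiset.card_le_card hle; omega
    have hc1 : 1 ≤ Multiset.card T := by
      rwa [Nat.one_le_iff_ne_zero, Ne, Multiset.card_eq_zero]
    interval_cases h : Multiset.card T
    · obtain ⟨y, hy⟩ := Multiset.card_eq_one.mp h
      subst hy
      have hmem : y ∈ ({x, -x} : Multiset G) := Multiset.mem_of_le hle (by simp)
      rw [Multiset.sum_singleton]
      rcases (by simpa using hmem : y = x ∨ y = -x) with h' | h' <;> subst h'
      · exact hx
      · exact neg_ne_zero.mpr hx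
    · exact absurd (Multiset.eq_of_le_of_card_le hle (by omega)) hTne

lemma atom2_pair {U : Multiset G} (hU : IsMinZS G U) (hc : Multiset.card U = 2) :
    ∃ x : G, x ≠ 0 ∧ U = {x, -x} := by
  obtain ⟨a, b, hab⟩ := Multiset.card_eq_two.mp hc
  have hsum : a + b = 0 := by
    have := hU.2.1
    rw [hab] at this
    simpa [Multiset.insert_eq_cons] using this
  have hb : b = -a := eq_neg_of_add_eq_zero_right hsum
  refine ⟨a, ?_, by rw [hab, hb]⟩
  intro ha0
  refine hU.2.2 {a} ?_ (by simp) ?_ (by simpa using ha0)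
  · rw [hab, Multiset.insert_eq_cons]
    exact Multiset.singleton_le.mpr (Multiset.mem_cons_self a _)
  · intro h
    have := congrArg Multiset.card h
    rw [hab] at this
    simp [Multiset.insert_eq_cons] at this

lemma isProd2_bal {S : Multiset G} (h : IsProd2Atoms G S) : Bal S := by
  obtain ⟨L, hL, hsum⟩ := h
  subst hsum
  induction L using Multiset.induction with
  | empty => exact bal_zero
  | cons U s ih =>
    rw [Multiset.sum_cons]
    have hU := hL U (Multiset.mem_cons_self U s)
    obtain ⟨x, hx, hUx⟩ := atom2_pair hU.1 hU.2
    exact bal_add (hUx ▸ bal_pair hx)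
      (ih fun V hV => hL V (Multiset.mem_cons_of_mem hV))

lemma bal_isProd2 (S : Multiset G) (h : Bal S) : IsProd2Atoms G S := by
  induction S using Multiset.strongInductionOn with
  | _ S ih =>
    by_cases hS : S = 0
    · exact ⟨0, by simp, by simp [hS]⟩
    · obtain ⟨a, ha⟩ := Multiset.exists_mem_of_ne_zero hS
      have ha0 : a ≠ 0 := fun h0 => h.1 (h0 ▸ ha)
      have hple : ({a, -a} : Multiset G) ≤ S := by
        rw [Multiset.le_iff_count]
        intro x
        rw [count_pair]
        by_cases h1 : x = a
        · subst h1
          rw [if_pos rfl]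
          have hpos : 0 < S.count x := Multiset.count_pos.mpr ha
          by_cases h2 : x = -x
          · rw [if_pos h2]
            obtain ⟨m, hm⟩ := h.2.2 x (add_eq_zero_iff_eq_neg.mpr h2)
            omega
          · rw [if_neg h2]
            omega
        · rw [if_neg h1]
          by_cases h2 : x = -a
          · subst h2
            rw [if_pos rfl]
            have hpos : 0 < S.count a := Multiset.count_pos.mpr ha
            have hsym := h.2.1 a
            omega
          · rw [if_neg h2]
            exact Nat.zero_le _
      have hlt : S - {a, -a} < S := by
        refine lt_of_le_of_ne (Multiset.sub_le_self S _) ?_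
        intro heq
        have hc := congrArg Multiset.card heq
        rw [Multiset.card_sub hple] at hc
        have h2c := Multiset.card_le_card hple
        rw [(pair_atom ha0).2] at h2c hc
        omega
      obtain ⟨L, hL, hLs⟩ := ih _ hlt (bal_sub h (bal_pair ha0) hple)
      refine ⟨({a, -a} : Multiset G) ::ₘ L, ?_, ?_⟩
      · intro U hU
        rcases Multiset.mem_cons.mp hU with h' | h'
        · subst h'; exact pair_atom ha0
        · exact hL U h'
      · rw [Multiset.sum_cons, hLs, add_comm]
        exact tsub_add_cancel_of_le hple

end AuxLemmas

/-- If `D^*(G)` is even, `E` is pair-nice, `X₁` is an atom of length `D^*(G)`,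
and `E·X₁` is a product of atoms of length `2`, then `E·X₁` is nice. -/
theorem stmt12 (G : Type*) [AddCommGroup G] [DecidableEq G] (r : ℕ) (n : Fin r → ℕ)
    (h1 : ∀ i, 1 < n i) (hdvd : ∀ i j : Fin r, i ≤ j → n i ∣ n j)
    (e : G ≃+ ((i : Fin r) → ZMod (n i)))
    (d : ℕ) (hd : d = 1 + ∑ i, (n i - 1)) (hdeven : Even d)
    (E X1 : Multiset G) (hE : PairNice G d E)
    (hX1 : IsMinZS G X1 ∧ Multiset.card X1 = d)
    (hprod : IsProd2Atoms G (E + X1)) :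
    Nice G d (E + X1) := by
  obtain ⟨k, hk1, U, g, hUall, hUsum, hgmem, hG2k⟩ := hE
  -- d ≥ 2
  have hd2 : 2 ≤ d := by
    obtain ⟨m, hm⟩ := hdeven
    omega
  -- 0 ∉ X1
  have h0X1 : (0 : G) ∉ X1 := by
    intro h0
    refine hX1.1.2.2 {0} (Multiset.singleton_le.mpr h0) (by simp) ?_ (by simp)
    intro h
    have := congrArg Multiset.card h
    rw [hX1.2] at this
    simp at this
    omega
  obtain ⟨a, ha⟩ := Multiset.exists_mem_of_ne_zero hX1.1.1
  have ha0 : a ≠ 0 := fun h0 => h0X1 (h0 ▸ ha)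
  set G2k : Multiset G := ∑ i : Fin (2 * k), ({g i} : Multiset G) with hG2kdef
  have BalS : Bal (E + X1) := isProd2_bal hprod
  have BalG : Bal G2k := isProd2_bal hG2k
  have hGE : G2k ≤ E := by
    rw [← hUsum]
    exact Finset.sum_le_sum fun i _ => Multiset.singleton_le.mpr (hgmem i)
  have hTle : G2k + {a} ≤ E + X1 := add_le_add hGE (Multiset.singleton_le.mpr ha)
  have hlt : (G2k + {a}).count (-a) < (E + X1).count (-a) := by
    rw [Multiset.count_add]
    by_cases h2a : a = -a
    · have haa : a + a = 0 := add_eq_zero_iff_eq_neg.mpr h2a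
      obtain ⟨m, hm⟩ := BalG.2.2 a haa
      obtain ⟨p, hp⟩ := BalS.2.2 a haa
      have hle := Multiset.count_le_of_le a hTle
      rw [Multiset.count_add, Multiset.count_singleton_self] at hle
      rw [← h2a, Multiset.count_singleton_self]
      omega
    · have hne : -a ≠ a := fun h => h2a h.symm
      rw [Multiset.count_singleton, if_neg hne]
      have h1 : G2k.count (-a) = G2k.count a := (BalG.2.1 a).symm
      have h2 : (E + X1).count (-a) = (E + X1).count a := (BalS.2.1 a).symm
      have hle := Multiset.count_le_of_le a hTle
      rw [Multiset.count_add, Multiset.count_singleton_self] at hle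
      omega
  have hmemh : -a ∈ E + X1 - (G2k + {a}) := by
    rw [← Multiset.count_pos, Multiset.count_sub]
    omega
  have hT2le : (G2k + {a}) + {-a} ≤ E + X1 := by
    rw [Multiset.le_iff_count]
    intro x
    by_cases hx : x = -a
    · subst hx
      rw [Multiset.count_add, Multiset.count_singleton_self]
      omega
    · rw [Multiset.count_add, Multiset.count_singleton, if_neg hx, add_zero]
      exact Multiset.count_le_of_le x hTle
  have hT2eq : (G2k + {a}) + {-a} = G2k + ({a, -a} : Multiset G) := by
    rw [add_assoc, Multiset.insert_eq_cons, ← Multiset.singleton_add]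
  have BalT2 : Bal ((G2k + {a}) + {-a}) := by
    rw [hT2eq]
    exact bal_add BalG (bal_pair ha0)
  -- the extended factorization
  refine ⟨k, hk1, (Fin.snoc U X1 : Fin (2 * k + 1) → Multiset G), (Fin.snoc g a : Fin (2 * k + 1) → G), ?_, ?_, ?_, Or.inr ⟨hdeven, -a, ?_⟩⟩
  · intro i
    refine Fin.lastCases ?_ ?_ i
    · simpa using hX1
    · intro j
      simpa using hUall j
  · rw [Fin.sum_univ_castSucc]
    simp only [Fin.snoc_castSucc, Fin.snoc_last]
    rw [hUsum]
  · intro i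
    refine Fin.lastCases ?_ ?_ i
    · simpa using ha
    · intro j
      simpa using hgmem j
  · have hsumg' : (∑ i : Fin (2 * k + 1), ({(Fin.snoc g a : Fin (2 * k + 1) → G) i} : Multiset G)) = G2k + {a} := by
      rw [Fin.sum_univ_castSucc]
      simp only [Fin.snoc_castSucc, Fin.snoc_last]
      rfl
    rw [hsumg']
    exact ⟨hmemh, bal_isProd2 _ (bal_sub BalS BalT2 hT2le), bal_isProd2 _ BalT2⟩
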